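/- Let h : ℝ → ℝ be square-integrable on [0,1] with respect to Lebesgue measure. Then ∫₀¹ ( ∫_α¹ h(t) dt )² dα ≤ (1/2) · ∫₀¹ h(t)² dt. -/

import Mathlib

open MeasureTheory

/-- Cauchy–Schwarz/Fubini tail bound: `∫₀¹ (∫_α¹ h)² dα ≤ (1/2) ∫₀¹ h²`. -/
theorem tail_integral_sq_bound
    (h : ℝ → ℝ)
    (hmem : MemLp h 2 (volume.restrict (Set.Icc (0 : ℝ) 1))) :
    (∫ α in (0 : ℝ)..1, (∫ t in α..1, h t) ^ 2) ≤ (1 / 2) * ∫ t in (0 : ℝ)..1, (h t) ^ 2 := by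
  set I : ℝ := ∫ t in (0 : ℝ)..1, (h t) ^ 2 with hI
  have hint : IntegrableOn h (Set.Icc (0:ℝ) 1) := hmem.integrable (by norm_num)
  have hsq : IntegrableOn (fun t => (h t) ^ 2) (Set.Icc (0:ℝ) 1) := hmem.integrable_sq
  have hInonneg : 0 ≤ I := by
    rw [hI, intervalIntegral.integral_of_le zero_le_one]
    exact integral_nonneg fun t => sq_nonneg _
  -- pointwise Cauchy-Schwarz bound
  have key : ∀ α ∈ Set.Icc (0:ℝ) 1, (∫ t in α..1, h t) ^ 2 ≤ (1 - α) * I := by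
    intro α hα
    obtain ⟨hα0, hα1⟩ := hα
    have hsub : Set.Ioc α 1 ⊆ Set.Icc (0:ℝ) 1 :=
      fun x hx => ⟨le_trans hα0 (le_of_lt hx.1), hx.2⟩
    have hmem' : MemLp h 2 (volume.restrict (Set.Ioc α 1)) :=
      hmem.mono_measure (Measure.restrict_mono hsub le_rfl)
    have hpq : (2:ℝ).HolderConjugate 2 := ⟨by norm_num, by norm_num, by norm_num⟩
    have h1 : MemLp (fun _ : ℝ => (1:ℝ)) (ENNReal.ofReal 2) (volume.restrict (Set.Ioc α 1)) := by
      rw [show ENNReal.ofReal 2 = 2 by norm_num]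
      exact memLp_const 1
    have habs : MemLp (fun t => |h t|) (ENNReal.ofReal 2) (volume.restrict (Set.Ioc α 1)) := by
      rw [show ENNReal.ofReal 2 = 2 by norm_num]
      simpa using hmem'.norm
    have hCS := integral_mul_le_Lp_mul_Lq_of_nonneg (μ := volume.restrict (Set.Ioc α 1)) hpq
      (f := fun t => |h t|) (g := fun _ => 1)
      (Filter.Eventually.of_forall fun x => abs_nonneg _)
      (Filter.Eventually.of_forall fun x => zero_le_one) habs h1
    simp only [mul_one, Real.one_rpow] at hCS
    have hvol : ∫ _ in Set.Ioc α 1, (1:ℝ) = 1 - α := by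
      simp [Real.volume_Ioc, ENNReal.toReal_ofReal (by linarith : (0:ℝ) ≤ 1 - α), hα1]
    rw [hvol] at hCS
    have hsqnonneg : 0 ≤ ∫ t in Set.Ioc α 1, |h t| ^ 2 :=
      integral_nonneg fun t => sq_nonneg _
    have h2 : |∫ t in α..1, h t| ≤ ∫ t in Set.Ioc α 1, |h t| := by
      rw [intervalIntegral.integral_of_le hα1]
      simpa using norm_integral_le_integral_norm (μ := volume.restrict (Set.Ioc α 1)) h
    have h3 : (∫ t in α..1, h t) ^ 2 ≤ (∫ t in Set.Ioc α 1, |h t| ^ 2) * (1 - α) := by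
      calc (∫ t in α..1, h t) ^ 2 = |∫ t in α..1, h t| ^ 2 := by rw [sq_abs]
        _ ≤ ((∫ t in Set.Ioc α 1, |h t| ^ 2) ^ ((1:ℝ)/2) * (1 - α) ^ ((1:ℝ)/2)) ^ 2 := by
            apply pow_le_pow_left₀ (abs_nonneg _)
            calc |∫ t in α..1, h t| ≤ ∫ t in Set.Ioc α 1, |h t| := h2
              _ ≤ _ := by
                  have := hCS
                  simpa [Real.rpow_natCast] using this
        _ = (∫ t in Set.Ioc α 1, |h t| ^ 2) * (1 - α) := by
            rw [mul_pow, ← Real.rpow_natCast ((∫ t in Set.Ioc α 1, |h t| ^ 2) ^ ((1:ℝ)/2)) 2,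
              ← Real.rpow_natCast ((1 - α) ^ ((1:ℝ)/2)) 2,
              ← Real.rpow_mul hsqnonneg, ← Real.rpow_mul (by linarith : (0:ℝ) ≤ 1 - α)]
            norm_num
    have h4 : (∫ t in Set.Ioc α 1, |h t| ^ 2) ≤ I := by
      rw [hI, intervalIntegral.integral_of_le zero_le_one]
      have : ∀ t, |h t| ^ 2 = (h t) ^ 2 := fun t => sq_abs _
      simp_rw [this]
      apply setIntegral_mono_set (hsq.mono_set Set.Ioc_subset_Icc_self)
      · exact Filter.Eventually.of_forall fun t => sq_nonneg _
      · exact HasSubset.Subset.eventuallyLE (fun x hx => ⟨lt_of_le_of_lt hα0 hx.1, hx.2⟩)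
    calc (∫ t in α..1, h t) ^ 2 ≤ (∫ t in Set.Ioc α 1, |h t| ^ 2) * (1 - α) := h3
      _ ≤ I * (1 - α) := by
          apply mul_le_mul_of_nonneg_right h4 (by linarith)
      _ = (1 - α) * I := mul_comm _ _
  -- integrability of the LHS integrand: it is continuous
  have hcont : ContinuousOn (fun α => (∫ t in α..1, h t) ^ 2) (Set.Icc (0:ℝ) 1) := by
    have hprim : ContinuousOn (fun α => ∫ t in α..1, h t) (Set.Icc (0:ℝ) 1) := by
      have := intervalIntegral.continuousOn_primitive_interval_left
        (a := (0:ℝ)) (b := (1:ℝ)) (f := h) (μ := volume)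
        (by simpa [Set.uIcc_of_le (zero_le_one : (0:ℝ) ≤ 1)] using hint)
      simpa [Set.uIcc_of_le (zero_le_one : (0:ℝ) ≤ 1)] using this
    exact hprim.pow 2
  have hg : IntervalIntegrable (fun α => (1 - α) * I) volume 0 1 :=
    (Continuous.intervalIntegrable (by continuity) 0 1)
  have hf : IntervalIntegrable (fun α => (∫ t in α..1, h t) ^ 2) volume 0 1 := by
    apply ContinuousOn.intervalIntegrable
    simpa [Set.uIcc_of_le (zero_le_one : (0:ℝ) ≤ 1)] using hcont
  calc (∫ α in (0:ℝ)..1, (∫ t in α..1, h t) ^ 2)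
      ≤ ∫ α in (0:ℝ)..1, (1 - α) * I :=
        intervalIntegral.integral_mono_on zero_le_one hf hg key
    _ = (1/2) * I := by
        rw [intervalIntegral.integral_mul_const]
        have : (∫ α in (0:ℝ)..1, (1 - α)) = 1/2 := by
          rw [intervalIntegral.integral_sub intervalIntegrable_const
            (intervalIntegral.intervalIntegrable_id)]
          simp
          norm_num
        rw [this]
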